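/- arXiv:1909.00634 — 3 statements merged into one kernel-verified Lean document; each statement's English description precedes it below -/
import Mathlib

section
/- The polynomial x^3 + 36x^2 - 1728 is irreducible over ℚ, and if α is a root of it in an algebraic closure of ℚ, then α^3 - 432 is not a square in ℚ(α). -/
open Polynomial IntermediateField


instance : Fact (Nat.Prime 7) := ⟨by norm_num⟩

lemma irrZ : Irreducible (X ^ 3 + 36 * X ^ 2 - 1728 : ℤ[X]) := by
  have hmon : (X ^ 3 + 36 * X ^ 2 - 1728 : ℤ[X]).Monic := by
    monicity!
  apply hmon.irreducible_of_irreducible_map (Int.castRingHom (ZMod 7))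
  have hmap : (X ^ 3 + 36 * X ^ 2 - 1728 : ℤ[X]).map (Int.castRingHom (ZMod 7))
      = X ^ 3 + 36 * X ^ 2 - 1728 := by
    simp [Polynomial.map_ofNat]
  rw [hmap]
  have hd : (X ^ 3 + 36 * X ^ 2 - 1728 : (ZMod 7)[X]).natDegree = 3 := by
    compute_degree!
  rw [irreducible_iff_roots_eq_zero_of_degree_le_three (by omega) (by omega)]
  rw [Multiset.eq_zero_iff_forall_notMem]
  intro r hr
  rw [mem_roots'] at hr
  have hr2 := hr.2
  simp only [IsRoot, eval_sub, eval_add, eval_mul, eval_pow, eval_X, eval_ofNat] at hr2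
  have key : ∀ r : ZMod 7, r ^ 3 + 36 * r ^ 2 - 1728 ≠ 0 := by decide
  exact key r hr2

lemma irrQ : Irreducible (X ^ 3 + 36 * X ^ 2 - 1728 : ℚ[X]) := by
  have hmon : (X ^ 3 + 36 * X ^ 2 - 1728 : ℤ[X]).Monic := by
    monicity!
  have := (hmon.irreducible_iff_irreducible_map_fraction_map (K := ℚ)).mp irrZ
  have hmap : (X ^ 3 + 36 * X ^ 2 - 1728 : ℤ[X]).map (algebraMap ℤ ℚ)
      = X ^ 3 + 36 * X ^ 2 - 1728 := by
    simp [Polynomial.map_ofNat]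
  rwa [hmap] at this




lemma monQ : (X ^ 3 + 36 * X ^ 2 - 1728 : ℚ[X]).Monic := by
  monicity!

lemma aux_indep {α : AlgebraicClosure ℚ}
    (hmin : minpoly ℚ α = X ^ 3 + 36 * X ^ 2 - 1728) (p q r : ℚ)
    (h : algebraMap ℚ (AlgebraicClosure ℚ) p + algebraMap ℚ (AlgebraicClosure ℚ) q * α
        + algebraMap ℚ (AlgebraicClosure ℚ) r * α ^ 2 = 0) :
    p = 0 ∧ q = 0 ∧ r = 0 := by
  have h0 : aeval α (C p + C q * X + C r * X ^ 2) = 0 := by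
    simpa [map_add, map_mul, map_pow, aeval_C, aeval_X] using h
  have hd : (C p + C q * X + C r * X ^ 2 : ℚ[X]) = 0 := by
    by_contra hne
    have hdvd := minpoly.dvd ℚ α h0
    have hle := Polynomial.natDegree_le_of_dvd hdvd hne
    rw [hmin] at hle
    have h3 : (X ^ 3 + 36 * X ^ 2 - 1728 : ℚ[X]).natDegree = 3 := by compute_degree!
    have h2 : (C p + C q * X + C r * X ^ 2 : ℚ[X]).natDegree ≤ 2 := by compute_degree
    omega
  refine ⟨?_, ?_, ?_⟩
  · have := congrArg (fun P : ℚ[X] => P.coeff 0) hd; simpa using this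
  · have := congrArg (fun P : ℚ[X] => P.coeff 1) hd; simpa using this
  · have := congrArg (fun P : ℚ[X] => P.coeff 2) hd; simpa using this

theorem part2 (α : AlgebraicClosure ℚ)
    (h : aeval α (X ^ 3 + 36 * X ^ 2 - 1728 : ℚ[X]) = 0) :
    ¬ ∃ y ∈ IntermediateField.adjoin ℚ {α}, y ^ 2 = α ^ 3 - 432 := by
  rintro ⟨y, hy, hy2⟩
  have hg0 : α ^ 3 + 36 * α ^ 2 - 1728 = 0 := by
    simpa [map_add, map_sub, map_mul, map_pow, map_ofNat] using h
  have hmin : minpoly ℚ α = X ^ 3 + 36 * X ^ 2 - 1728 :=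
    (minpoly.eq_of_irreducible_of_monic irrQ h monQ).symm
  have hint : IsIntegral ℚ α := ⟨_, monQ, h⟩
  -- y = aeval α p for some p
  have hy' : y ∈ Algebra.adjoin ℚ {α} := by
    rw [← IntermediateField.adjoin_simple_toSubalgebra_of_isAlgebraic hint.isAlgebraic]
    exact hy
  rw [Algebra.adjoin_singleton_eq_range_aeval] at hy'
  obtain ⟨p, hp⟩ := hy'
  set g : ℚ[X] := X ^ 3 + 36 * X ^ 2 - 1728 with hgdef
  have hrerew : aeval α (p %ₘ g) = y := by
    have := Polynomial.modByMonic_add_div p g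
    calc aeval α (p %ₘ g) = aeval α (p %ₘ g) + aeval α g * aeval α (p /ₘ g) := by
          rw [h]; ring
    _ = aeval α (p %ₘ g + g * (p /ₘ g)) := by simp [map_add, map_mul]
    _ = aeval α p := by rw [this]
    _ = y := hp
  have hdeg : (p %ₘ g).natDegree < 3 := by
    have hlt := Polynomial.degree_modByMonic_lt p monQ
    have hgd : g.degree = 3 := by rw [hgdef]; compute_degree!
    rw [hgd] at hlt
    by_cases h0 : p %ₘ g = 0
    · rw [h0]; simp
    · exact (Polynomial.natDegree_lt_iff_degree_lt h0).mpr (by exact_mod_cast hlt)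
  set a : ℚ := (p %ₘ g).coeff 0
  set b : ℚ := (p %ₘ g).coeff 1
  set c : ℚ := (p %ₘ g).coeff 2
  have hyrep : y = algebraMap ℚ _ a + algebraMap ℚ _ b * α + algebraMap ℚ _ c * α ^ 2 := by
    rw [← hrerew, Polynomial.aeval_eq_sum_range' hdeg]
    simp [Finset.sum_range_succ, Algebra.smul_def]
    rfl
  rw [hyrep] at hy2
  have heq : algebraMap ℚ (AlgebraicClosure ℚ)
        (a ^ 2 + 3456 * b * c - 62208 * c ^ 2 - 1296)
      + algebraMap ℚ (AlgebraicClosure ℚ) (2 * a * b + 1728 * c ^ 2) * α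
      + algebraMap ℚ (AlgebraicClosure ℚ)
        (b ^ 2 + 2 * a * c - 72 * b * c + 1296 * c ^ 2 + 36) * α ^ 2 = 0 := by
    simp only [map_add, map_sub, map_mul, map_pow, map_ofNat]
    linear_combination hy2 + (1 - 2 * (algebraMap ℚ (AlgebraicClosure ℚ) b)
        * (algebraMap ℚ (AlgebraicClosure ℚ) c)
        + 36 * (algebraMap ℚ (AlgebraicClosure ℚ) c) ^ 2
        - (algebraMap ℚ (AlgebraicClosure ℚ) c) ^ 2 * α) * hg0
  obtain ⟨h1, h2, h3⟩ := aux_indep hmin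
      (a ^ 2 + 3456 * b * c - 62208 * c ^ 2 - 1296)
      (2 * a * b + 1728 * c ^ 2)
      (b ^ 2 + 2 * a * c - 72 * b * c + 1296 * c ^ 2 + 36) heq
  have e1 : a ^ 2 + 3456 * b * c - 62208 * c ^ 2 = 1296 := by linarith
  have e2 : 2 * a * b + 1728 * c ^ 2 = 0 := by linarith
  have e3 : b ^ 2 + 2 * a * c - 72 * b * c + 1296 * c ^ 2 = -36 := by linarith
  have key : (a ^ 3 - 36 * a ^ 2 * b + 1296 * a ^ 2 * c - 5184 * a * b * c
      + 124416 * a * c ^ 2 + 1728 * b ^ 3 - 62208 * b ^ 2 * c + 2985984 * c ^ 3) ^ 2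
      = -6530347008 := by
    calc (a ^ 3 - 36 * a ^ 2 * b + 1296 * a ^ 2 * c - 5184 * a * b * c
        + 124416 * a * c ^ 2 + 1728 * b ^ 3 - 62208 * b ^ 2 * c + 2985984 * c ^ 3) ^ 2
        = (a ^ 2 + 3456 * b * c - 62208 * c ^ 2) ^ 3
          - 36 * (a ^ 2 + 3456 * b * c - 62208 * c ^ 2) ^ 2 * (2 * a * b + 1728 * c ^ 2)
          + 1296 * (a ^ 2 + 3456 * b * c - 62208 * c ^ 2) ^ 2
            * (b ^ 2 + 2 * a * c - 72 * b * c + 1296 * c ^ 2)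
          - 5184 * (a ^ 2 + 3456 * b * c - 62208 * c ^ 2) * (2 * a * b + 1728 * c ^ 2)
            * (b ^ 2 + 2 * a * c - 72 * b * c + 1296 * c ^ 2)
          + 124416 * (a ^ 2 + 3456 * b * c - 62208 * c ^ 2)
            * (b ^ 2 + 2 * a * c - 72 * b * c + 1296 * c ^ 2) ^ 2
          + 1728 * (2 * a * b + 1728 * c ^ 2) ^ 3
          - 62208 * (2 * a * b + 1728 * c ^ 2) ^ 2
            * (b ^ 2 + 2 * a * c - 72 * b * c + 1296 * c ^ 2)
          + 2985984 * (b ^ 2 + 2 * a * c - 72 * b * c + 1296 * c ^ 2) ^ 3 := by ring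
    _ = -6530347008 := by rw [e1, e2, e3]; norm_num
  nlinarith [sq_nonneg (a ^ 3 - 36 * a ^ 2 * b + 1296 * a ^ 2 * c - 5184 * a * b * c
      + 124416 * a * c ^ 2 + 1728 * b ^ 3 - 62208 * b ^ 2 * c + 2985984 * c ^ 3), key]

theorem stmt_0 :
    Irreducible (X ^ 3 + 36 * X ^ 2 - 1728 : ℚ[X]) ∧
    ∀ α : AlgebraicClosure ℚ,
      aeval α (X ^ 3 + 36 * X ^ 2 - 1728 : ℚ[X]) = 0 →
      ¬ ∃ y ∈ IntermediateField.adjoin ℚ {α}, y ^ 2 = α ^ 3 - 432 := by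
  exact ⟨irrQ, part2⟩
end

section
/- Let α be a root of x^3 - 3x - 1 over ℚ. For a nonzero rational number r, the equation z^3 = 4r^2 has a solution z in ℚ(α) if and only if 4r^2 is a cube in ℚ. -/
open Polynomial IntermediateField

lemma aux_irred : Irreducible (X ^ 2 + X + 1 : ℚ[X]) := by
  have hnd2 : (X ^ 2 + X + 1 : ℚ[X]).natDegree = 2 := by compute_degree!
  rw [irreducible_iff_roots_eq_zero_of_degree_le_three (by omega) (by omega)]
  rw [Multiset.eq_zero_iff_forall_notMem]
  intro q hq
  have hne : (X ^ 2 + X + 1 : ℚ[X]) ≠ 0 := fun h0 => by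
    simpa using congrArg (Polynomial.eval 0) h0
  rw [mem_roots hne, IsRoot.def] at hq
  have hq2 : q ^ 2 + q + 1 = 0 := by
    simpa using hq
  nlinarith [sq_nonneg (2 * q + 1)]

theorem stmt_1 (α : AlgebraicClosure ℚ) (hα : α ^ 3 - 3 * α - 1 = 0)
    (r : ℚ) (hr : r ≠ 0) :
    (∃ z ∈ IntermediateField.adjoin ℚ {α},
        z ^ 3 = ((4 * r ^ 2 : ℚ) : AlgebraicClosure ℚ)) ↔
      ∃ q : ℚ, q ^ 3 = 4 * r ^ 2 := by
  set c : ℚ := 4 * r ^ 2 with hc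
  have hc0 : c ≠ 0 := by positivity
  constructor
  · rintro ⟨z, hzK, hz3⟩
    rw [(eq_ratCast (algebraMap ℚ (AlgebraicClosure ℚ)) c).symm] at hz3
    by_contra h
    push_neg at h
    have hirr : Irreducible (X ^ 3 - C c : ℚ[X]) :=
      X_pow_sub_C_irreducible_of_prime Nat.prime_three h
    set K := IntermediateField.adjoin ℚ ({α} : Set (AlgebraicClosure ℚ)) with hK
    have hαK : α ∈ K := subset_adjoin ℚ _ rfl
    -- f = X^3 - 3X - 1 and its roots
    set f : ℚ[X] := X ^ 3 - 3 * X - 1 with hf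
    have hfne : f ≠ 0 := by
      intro h0
      have := congrArg (Polynomial.eval 0) h0
      simp [hf] at this
    have hfm : f.Monic := by
      rw [hf]; monicity!
    have key : ∀ x : AlgebraicClosure ℚ, x ^ 3 - 3 * x - 1 = 0 →
        x = α ∨ x = 2 - α ^ 2 ∨ x = α ^ 2 - α - 2 := by
      intro x hx
      have : (x - α) * (x - (2 - α ^ 2)) * (x - (α ^ 2 - α - 2)) = 0 := by
        linear_combination hx + ((1 - α) * x + (α ^ 2 - α - 1)) * hα
      rcases mul_eq_zero.mp this with h1 | h2
      · rcases mul_eq_zero.mp h1 with h1 | h1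
        · exact Or.inl (sub_eq_zero.mp h1)
        · exact Or.inr (Or.inl (sub_eq_zero.mp h1))
      · exact Or.inr (Or.inr (sub_eq_zero.mp h2))
    have haev : ∀ x : AlgebraicClosure ℚ, (aeval x) f = x ^ 3 - 3 * x - 1 := by
      intro x
      rw [hf]
      simp only [map_sub, map_mul, map_pow, aeval_X, map_one, map_ofNat]
    have h2K : (2 : AlgebraicClosure ℚ) ∈ K := by
      have := K.add_mem K.one_mem K.one_mem
      rw [one_add_one_eq_two] at this
      exact this
    have hα2K : α ^ 2 ∈ K := by
      rw [sq]; exact K.mul_mem hαK hαK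
    -- K is the splitting field of f, hence normal
    have hroots : K = IntermediateField.adjoin ℚ (f.rootSet (AlgebraicClosure ℚ)) := by
      apply le_antisymm
      · rw [hK]
        apply IntermediateField.adjoin_le_iff.mpr
        intro x hx
        rcases hx with rfl
        apply subset_adjoin
        rw [Polynomial.mem_rootSet]
        exact ⟨hfne, by rw [haev]; exact hα⟩
      · apply IntermediateField.adjoin_le_iff.mpr
        intro x hx
        rw [Polynomial.mem_rootSet] at hx
        rw [haev] at hx
        rcases key x hx.2 with rfl | rfl | rfl
        · exact hαK
        · exact K.sub_mem h2K hα2K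
        · exact K.sub_mem (K.sub_mem hα2K hαK) h2K
    haveI hsf : IsSplittingField ℚ K f := by
      rw [hroots]
      exact IntermediateField.adjoin_rootSet_isSplittingField
        (IsAlgClosed.splits _)
    haveI : FiniteDimensional ℚ K := IsSplittingField.finiteDimensional K f
    haveI hnormal : Normal ℚ K := Normal.of_isSplittingField f
    -- z as an element of K
    set z' : K := ⟨z, hzK⟩ with hz'
    have hz'0 : z' ≠ 0 := by
      intro h0
      apply hc0
      have h1 : z = 0 := congrArg Subtype.val h0
      have h2 : algebraMap ℚ (AlgebraicClosure ℚ) c = 0 := by rw [← hz3, h1]; ring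
      exact (_root_.map_eq_zero (algebraMap ℚ (AlgebraicClosure ℚ))).mp h2
    have hz'3 : z' ^ 3 = algebraMap ℚ K c := by
      apply Subtype.ext
      push_cast
      rw [hz3]
      rfl
    have haevz : (aeval z') (X ^ 3 - C c : ℚ[X]) = 0 := by
      simp [hz'3]
    have hmin : minpoly ℚ z' = X ^ 3 - C c := by
      refine (minpoly.eq_of_irreducible_of_monic hirr haevz ?_).symm
      apply monic_X_pow_sub_C _ (by norm_num)
    -- finrank K = 3
    have hint : IsIntegral ℚ z' := IsIntegral.of_finite ℚ z'
    have hdvd3 : 3 ∣ Module.finrank ℚ K := by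
      have := minpoly.degree_dvd hint
      rwa [hmin, natDegree_X_pow_sub_C] at this
    have hintα : IsIntegral ℚ α := ⟨f, hfm, by rw [← aeval_def, haev]; exact hα⟩
    have hle3 : Module.finrank ℚ K ≤ 3 := by
      rw [hK, IntermediateField.adjoin.finrank hintα]
      have hdvd : minpoly ℚ α ∣ f := minpoly.dvd ℚ α (by rw [haev]; exact hα)
      have := Polynomial.natDegree_le_of_dvd hdvd hfne
      have hfd : f.natDegree = 3 := by
        rw [hf]; compute_degree!
      omega
    have hrank : Module.finrank ℚ K = 3 := by
      obtain ⟨k, hk⟩ := hdvd3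
      have : Module.finrank ℚ K ≠ 0 := Module.finrank_pos.ne'
      omega
    -- minpoly of z' splits in K : get the second root
    have hsplits : Splits ((X ^ 3 - C c : ℚ[X]).map (algebraMap ℚ K)) := by
      have := hnormal.splits z'
      rwa [hmin] at this
    have hmapeq : ((X ^ 3 - C c : ℚ[X]).map (algebraMap ℚ K)) =
        (X - C z') * (X ^ 2 + C z' * X + C z' ^ 2) := by
      push_cast [Polynomial.map_sub, Polynomial.map_pow, map_X, map_C]
      rw [← hz'3, map_pow]
      ring
    have hqsplits : Splits (X ^ 2 + C z' * X + C z' ^ 2) := by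
      rw [hmapeq] at hsplits
      refine Splits.of_dvd hsplits ?_ (dvd_mul_left _ _)
      rw [← hmapeq]
      exact Polynomial.map_ne_zero (X_pow_sub_C_ne_zero (by norm_num) c)
    have hdeg2 : (X ^ 2 + C z' * X + C z' ^ 2 : K[X]).degree ≠ 0 := by
      have : (X ^ 2 + C z' * X + C z' ^ 2 : K[X]).degree = 2 := by compute_degree!
      rw [this]; norm_num
    obtain ⟨w, hw⟩ := Splits.exists_eval_eq_zero hqsplits hdeg2
    simp only [eval_add, eval_mul, eval_pow, eval_X, eval_C] at hw
    -- t = w / z' is a primitive cube root of unity in K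
    set t : K := w / z' with ht
    have ht2 : t ^ 2 + t + 1 = 0 := by
      have hinv : z' * z'⁻¹ = 1 := mul_inv_cancel₀ hz'0
      have hzero : (w ^ 2 + z' * w + z' ^ 2) * z'⁻¹ ^ 2 = 0 := by rw [hw]; ring
      rw [ht, div_eq_mul_inv]
      linear_combination hzero - (w * z'⁻¹ + 1 + z' * z'⁻¹) * hinv
    have haevt : (aeval t) (X ^ 2 + X + 1 : ℚ[X]) = 0 := by
      simp only [map_add, map_pow, aeval_X, map_one]
      exact ht2
    have hnd2 : (X ^ 2 + X + 1 : ℚ[X]).natDegree = 2 := by compute_degree!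
    -- the minimal polynomial of t has degree 2
    have hminq : minpoly ℚ t = X ^ 2 + X + 1 := by
      refine (minpoly.eq_of_irreducible_of_monic aux_irred haevt ?_).symm
      monicity!
    have hintt : IsIntegral ℚ t := IsIntegral.of_finite ℚ t
    have hdvd2 : 2 ∣ Module.finrank ℚ K := by
      have := minpoly.degree_dvd hintt
      rwa [hminq, hnd2] at this
    rw [hrank] at hdvd2
    omega
  · rintro ⟨q, hq⟩
    exact ⟨algebraMap ℚ _ q, IntermediateField.algebraMap_mem _ q, by
      rw [← map_pow, hq, eq_ratCast]⟩
end

section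
/- The polynomial 7x^12 + 308x^11 - 2954x^10 - 19852x^9 - 35231x^8 - 82264x^7 - 111916x^6 - 42168x^5 + 15673x^4 + 14756x^3 + 1302x^2 + 196x - 1 is irreducible over ℚ. -/
open Polynomial

namespace Stmt3Aux

/-! ### List-encoded polynomials (big-endian) and verified trial division -/

variable {R : Type*} [CommRing R]

noncomputable def toP : List R → R[X]
  | [] => 0
  | c :: rest => C c * X ^ rest.length + toP rest

lemma degree_toP_lt : ∀ l : List R, (toP l).degree < (l.length : WithBot ℕ)
  | [] => by
      simp only [toP, degree_zero, List.length_nil, Nat.cast_zero]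
      exact WithBot.bot_lt_coe 0
  | c :: rest => by
      have h2 := degree_toP_lt rest
      simp only [toP, List.length_cons]
      refine lt_of_le_of_lt (degree_add_le _ _) (max_lt ?_ ?_)
      · refine lt_of_le_of_lt (degree_C_mul_X_pow_le _ _) ?_
        exact_mod_cast Nat.lt_succ_self _
      · refine lt_of_lt_of_le h2 ?_
        exact_mod_cast Nat.le_succ _

lemma toP_zipSub (c : R) : ∀ xs ys : List R, xs.length = ys.length →
    toP (List.zipWith (fun a b => a - c * b) xs ys) = toP xs - C c * toP ys
  | [], [], _ => by simp [toP]
  | [], _ :: _, h => by simp at h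
  | _ :: _, [], h => by simp at h
  | x :: xs, y :: ys, h => by
      have hl : xs.length = ys.length := by simpa using h
      have ih := toP_zipSub c xs ys hl
      have hlen : (List.zipWith (fun a b => a - c * b) xs ys).length = xs.length := by
        rw [List.length_zipWith, hl, min_self, ← hl]
      rw [List.zipWith_cons_cons]
      simp only [toP, hlen, ih, map_sub, map_mul]
      rw [hl]
      ring

lemma toP_replicate_zero : ∀ k : ℕ, toP (List.replicate k (0 : R)) = 0
  | 0 => by simp [toP]
  | k + 1 => by simp [List.replicate_succ, toP, toP_replicate_zero k]

lemma toP_append_zero : ∀ (xs : List R) (k : ℕ), toP (xs ++ List.replicate k 0) = toP xs * X ^ k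
  | [], k => by simp [toP, toP_replicate_zero]
  | x :: xs, k => by
      simp only [List.cons_append, toP, List.append_eq, List.length_append,
        List.length_replicate, toP_append_zero xs k]
      rw [pow_add]; ring

def remL (qt : List R) : ℕ → List R → List R
  | 0, f => f
  | _ + 1, [] => []
  | n + 1, c :: rest =>
      if rest.length < qt.length then c :: rest
      else remL qt n (List.zipWith (fun a b => a - c * b) rest
        (qt ++ List.replicate (rest.length - qt.length) 0))

lemma remL_spec (qt : List R) : ∀ (n : ℕ) (f : List R),
    ∃ u, toP f = toP (1 :: qt) * u + toP (remL qt n f)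
  | 0, f => ⟨0, by simp [remL]⟩
  | n + 1, [] => ⟨0, by simp [remL, toP]⟩
  | n + 1, c :: rest => by
      rw [remL]
      split
      · exact ⟨0, by simp⟩
      · next hge =>
        push_neg at hge
        obtain ⟨u, hu⟩ := remL_spec qt n (List.zipWith (fun a b => a - c * b) rest
          (qt ++ List.replicate (rest.length - qt.length) 0))
        rw [toP_zipSub c rest _ (by simp [Nat.add_sub_cancel' hge]), toP_append_zero] at hu
        refine ⟨C c * X ^ (rest.length - qt.length) + u, ?_⟩
        have hp : (X : R[X]) ^ rest.length = X ^ qt.length * X ^ (rest.length - qt.length) := by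
          rw [← pow_add, Nat.add_sub_cancel' hge]
        simp only [toP, map_one, one_mul] at hu ⊢
        linear_combination hu + C c * hp

lemma remL_len (qt : List R) : ∀ (n : ℕ) (f : List R),
    f.length ≤ n + qt.length → (remL qt n f).length ≤ qt.length
  | 0, f, h => by simpa [remL] using h
  | n + 1, [], _ => by simp [remL]
  | n + 1, c :: rest, h => by
      rw [remL]
      split
      · next hlt => simp only [List.length_cons]; omega
      · next hge =>
        apply remL_len qt n
        simp only [List.length_zipWith, List.length_append, List.length_replicate,
          List.length_cons] at *
        omega

lemma eq_zero_of_toP : ∀ {l : List R}, toP l = 0 → ∀ x ∈ l, x = 0 := by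
  intro l
  induction l with
  | nil => simp
  | cons c rest ih =>
    intro h
    have hc : c = 0 := by
      have h' := congrArg (fun p => coeff p rest.length) h
      simp only [toP, coeff_add, coeff_C_mul, coeff_X_pow, eq_self_iff_true, if_true, mul_one,
        coeff_zero, coeff_eq_zero_of_degree_lt (degree_toP_lt rest), add_zero] at h'
      exact h'
    have hrest : toP rest = 0 := by
      have h2 := h
      simp only [toP, hc, map_zero, zero_mul, zero_add] at h2
      exact h2
    intro x hx
    rcases List.mem_cons.mp hx with rfl | hx
    · exact hc
    · exact ih hrest x hx

lemma toP_eq_sum : ∀ l : List R,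
    toP l = ∑ i ∈ Finset.range l.length, C (l.getD i 0) * X ^ (l.length - 1 - i)
  | [] => by simp [toP]
  | c :: rest => by
      have ih := toP_eq_sum rest
      simp only [toP, ih, List.length_cons]
      rw [Finset.sum_range_succ']
      simp only [List.getD_cons_succ, List.getD_cons_zero, Nat.add_sub_cancel, Nat.sub_zero]
      rw [add_comm]
      congr 1
      apply Finset.sum_congr rfl
      intro i hi
      congr 2
      omega

lemma monic_bridge {q : R[X]} {d : ℕ} (hm : q.Monic) (hdeg : q.natDegree = d) :
    q = toP ((1 : R) :: List.ofFn (fun i : Fin d => q.coeff (d - 1 - i))) := by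
  conv_lhs => rw [q.as_sum_range' (d + 1) (by omega)]
  rw [toP_eq_sum]
  have hlen : ((1 : R) :: List.ofFn fun i : Fin d => q.coeff (d - 1 - i)).length = d + 1 := by
    simp
  rw [hlen]
  conv_lhs => rw [← Finset.sum_range_reflect]
  apply Finset.sum_congr rfl
  intro i hi
  rw [Finset.mem_range] at hi
  rw [← C_mul_X_pow_eq_monomial]
  have hgetD : ((1 : R) :: List.ofFn fun j : Fin d => q.coeff (d - 1 - j)).getD i 0
      = q.coeff (d + 1 - 1 - i) := by
    cases i with
    | zero =>
      simp only [List.getD_cons_zero, Nat.add_sub_cancel, Nat.sub_zero]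
      rw [← hdeg]
      exact (hm.coeff_natDegree).symm
    | succ j =>
      have hj : j < d := by omega
      simp only [List.getD_cons_succ]
      rw [List.getD_eq_getElem?_getD, List.getElem?_ofFn]
      simp only [List.ofFnNthVal, hj, dif_pos]
      show q.coeff (d - 1 - j) = _
      congr 1
      omega
  rw [hgetD]

lemma no_factor {R : Type*} [CommRing R] [IsDomain R] [DecidableEq R] {f : List R} {d : ℕ}
    (hd : 0 < d)
    (hchk : ∀ g : Fin d → R,
      ((remL (List.ofFn g) f.length f).any fun x => decide (x ≠ 0)) = true)
    {q : R[X]} (hq : q.Monic) (hqd : q.natDegree = d) : ¬ q ∣ toP f := by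
  intro hdvd
  set g : Fin d → R := fun i => q.coeff (d - 1 - i) with hg
  obtain ⟨u, hu⟩ := remL_spec (List.ofFn g) f.length f
  rw [← monic_bridge hq hqd] at hu
  have hrdvd : q ∣ toP (remL (List.ofFn g) f.length f) := by
    have he : toP (remL (List.ofFn g) f.length f) = toP f - q * u := by
      linear_combination -hu
    rw [he]
    exact dvd_sub hdvd (Dvd.intro u rfl)
  have hlen : (remL (List.ofFn g) f.length f).length ≤ d := by
    have := remL_len (List.ofFn g) f.length f (by simp)
    simpa using this
  have hz : toP (remL (List.ofFn g) f.length f) = 0 := by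
    refine eq_zero_of_dvd_of_degree_lt hrdvd ?_
    refine lt_of_lt_of_le (degree_toP_lt _) ?_
    rw [degree_eq_natDegree hq.ne_zero, hqd]
    exact_mod_cast hlen
  obtain ⟨x, hxmem, hxne⟩ := List.any_eq_true.mp (hchk g)
  exact (of_decide_eq_true hxne) (eq_zero_of_toP hz x hxmem)

/-! ### Enumeration of candidate divisors over `ZMod p` -/

def chkZ (p : ℕ) [NeZero p] (f : List (ZMod p)) : ℕ → List (ZMod p) → Bool
  | 0, qt => (remL qt f.length f).any fun x => decide (x ≠ 0)
  | d + 1, qt => (List.range p).all fun a => chkZ p f d ((a : ZMod p) :: qt)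

lemma chkZ_sound (p : ℕ) [NeZero p] (f : List (ZMod p)) :
    ∀ (d : ℕ) (qt : List (ZMod p)), chkZ p f d qt = true →
      ∀ g : Fin d → ZMod p,
        ((remL (List.ofFn g ++ qt) f.length f).any fun x => decide (x ≠ 0)) = true
  | 0, qt, h, g => by simpa [chkZ] using h
  | d + 1, qt, h, g => by
      rw [chkZ, List.all_eq_true] at h
      have hmem : (g (Fin.last d)).val ∈ List.range p := List.mem_range.mpr (ZMod.val_lt _)
      have h2 := h _ hmem
      have hcast : (((g (Fin.last d)).val : ℕ) : ZMod p) = g (Fin.last d) :=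
        ZMod.natCast_rightInverse _
      rw [hcast] at h2
      have h3 := chkZ_sound p f d (g (Fin.last d) :: qt) h2 (fun i => g i.castSucc)
      rw [List.ofFn_succ', List.concat_eq_append, List.append_assoc, List.singleton_append]
      exact h3

lemma chk_main (p : ℕ) [NeZero p] (f : List (ZMod p)) (d : ℕ) (h : chkZ p f d [] = true) :
    ∀ g : Fin d → ZMod p,
      ((remL (List.ofFn g) f.length f).any fun x => decide (x ≠ 0)) = true := by
  intro g
  simpa using chkZ_sound p f d [] h g

lemma toP_cons_one (t : List R) : toP ((1 : R) :: t) = X ^ t.length + toP t := by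
  simp only [toP, map_one, one_mul]

lemma monic_toP_one [Nontrivial R] (t : List R) : (toP ((1 : R) :: t)).Monic := by
  rw [toP_cons_one]
  exact monic_X_pow_add (degree_toP_lt t)

lemma natDegree_toP_one [Nontrivial R] (t : List R) :
    (toP ((1 : R) :: t)).natDegree = t.length := by
  rw [toP_cons_one]
  refine natDegree_eq_of_degree_eq_some ?_
  rw [degree_add_eq_left_of_degree_lt, degree_X_pow]
  rw [degree_X_pow]
  exact degree_toP_lt t

lemma irred_of_chk (p : ℕ) [Fact (Nat.Prime p)] (t : List (ZMod p)) (hlen : 0 < t.length)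
    (h : ∀ d, 0 < d → d ≤ t.length / 2 → chkZ p ((1 : ZMod p) :: t) d [] = true) :
    Irreducible (toP ((1 : ZMod p) :: t)) := by
  have hm := monic_toP_one t
  have hd := natDegree_toP_one t
  have hne1 : toP ((1 : ZMod p) :: t) ≠ 1 := by
    intro he
    rw [he, natDegree_one] at hd
    omega
  rw [hm.irreducible_iff_lt_natDegree_lt hne1]
  intro q hq hmem
  rw [Finset.mem_Ioc, hd] at hmem
  exact no_factor hmem.1 (chk_main p _ q.natDegree (h q.natDegree hmem.1 hmem.2)) hq rfl

lemma deg_dvd_list {K : Type*} [Field K] (n : ℕ) :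
    ∀ l : List K[X], (∀ r ∈ l, Irreducible r ∧ r.natDegree = n) →
      ∀ q : K[X], q ∣ l.prod → n ∣ q.natDegree
  | [], _, q, hq => by
      rw [List.prod_nil] at hq
      have hu := isUnit_of_dvd_unit hq isUnit_one
      rw [natDegree_eq_zero_of_isUnit hu]
      exact dvd_zero n
  | a :: l, hl, q, hq => by
      rw [List.prod_cons] at hq
      have ha := hl a List.mem_cons_self
      have hl' : ∀ r ∈ l, Irreducible r ∧ r.natDegree = n := fun r hr =>
        hl r (List.mem_cons_of_mem a hr)
      have hprodne : l.prod ≠ 0 := by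
        intro h0
        exact (hl' 0 (List.prod_eq_zero_iff.mp h0)).1.ne_zero rfl
      by_cases hcase : a ∣ q
      · obtain ⟨q', rfl⟩ := hcase
        have hq'ne : q' ≠ 0 := by
          rintro rfl
          rw [mul_zero] at hq
          exact (mul_ne_zero ha.1.ne_zero hprodne) (zero_dvd_iff.mp hq)
        have hq' : q' ∣ l.prod := (mul_dvd_mul_iff_left ha.1.ne_zero).mp hq
        rw [natDegree_mul ha.1.ne_zero hq'ne, ha.2]
        exact dvd_add (dvd_refl n) (deg_dvd_list n l hl' q' hq')
      · have hcop : IsCoprime a q := ha.1.coprime_iff_not_dvd.mpr hcase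
        exact deg_dvd_list n l hl' q (hcop.symm.dvd_of_dvd_mul_left hq)

/-! ### Concrete data -/

instance : Fact (Nat.Prime 13) := ⟨by norm_num⟩
instance : Fact (Nat.Prime 53) := ⟨by norm_num⟩

noncomputable def Pz : ℤ[X] :=
  C 7 * X ^ 12 + C 308 * X ^ 11 + C (-2954) * X ^ 10 + C (-19852) * X ^ 9 +
    C (-35231) * X ^ 8 + C (-82264) * X ^ 7 + C (-111916) * X ^ 6 + C (-42168) * X ^ 5 +
    C 15673 * X ^ 4 + C 14756 * X ^ 3 + C 1302 * X ^ 2 + C 196 * X + C (-1)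

-- factors mod 13 (monic quartics), big-endian tails
def q1t : List (ZMod 13) := [3, 4, 12, 2]
def q2t : List (ZMod 13) := [3, 1, 6, 5]
def q3t : List (ZMod 13) := [12, 12, 11, 5]
-- factors mod 53 (monic cubics), big-endian tails
def c1t : List (ZMod 53) := [48, 22, 14]
def c2t : List (ZMod 53) := [44, 47, 18]
def c3t : List (ZMod 53) := [11, 13, 23]
def c4t : List (ZMod 53) := [47, 11, 51]

set_option maxRecDepth 10000 in
lemma irr_q1 : Irreducible (toP ((1 : ZMod 13) :: q1t)) := by
  refine irred_of_chk 13 q1t (by norm_num [q1t]) ?_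
  intro d h1 h2
  have h2' : d ≤ 2 := by simpa [q1t] using h2
  interval_cases d <;> decide

set_option maxRecDepth 10000 in
lemma irr_q2 : Irreducible (toP ((1 : ZMod 13) :: q2t)) := by
  refine irred_of_chk 13 q2t (by norm_num [q2t]) ?_
  intro d h1 h2
  have h2' : d ≤ 2 := by simpa [q2t] using h2
  interval_cases d <;> decide

set_option maxRecDepth 10000 in
lemma irr_q3 : Irreducible (toP ((1 : ZMod 13) :: q3t)) := by
  refine irred_of_chk 13 q3t (by norm_num [q3t]) ?_
  intro d h1 h2
  have h2' : d ≤ 2 := by simpa [q3t] using h2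
  interval_cases d <;> decide

set_option maxRecDepth 10000 in
lemma irr_c1 : Irreducible (toP ((1 : ZMod 53) :: c1t)) := by
  refine irred_of_chk 53 c1t (by norm_num [c1t]) ?_
  intro d h1 h2
  have h2' : d ≤ 1 := by simpa [c1t] using h2
  interval_cases d
  decide

set_option maxRecDepth 10000 in
lemma irr_c2 : Irreducible (toP ((1 : ZMod 53) :: c2t)) := by
  refine irred_of_chk 53 c2t (by norm_num [c2t]) ?_
  intro d h1 h2
  have h2' : d ≤ 1 := by simpa [c2t] using h2
  interval_cases d
  decide

set_option maxRecDepth 10000 in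
lemma irr_c3 : Irreducible (toP ((1 : ZMod 53) :: c3t)) := by
  refine irred_of_chk 53 c3t (by norm_num [c3t]) ?_
  intro d h1 h2
  have h2' : d ≤ 1 := by simpa [c3t] using h2
  interval_cases d
  decide

set_option maxRecDepth 10000 in
lemma irr_c4 : Irreducible (toP ((1 : ZMod 53) :: c4t)) := by
  refine irred_of_chk 53 c4t (by norm_num [c4t]) ?_
  intro d h1 h2
  have h2' : d ≤ 1 := by simpa [c4t] using h2
  interval_cases d
  decide

lemma hq1 : toP ((1 : ZMod 13) :: q1t) =
    X ^ 4 + 3 * X ^ 3 + 4 * X ^ 2 + 12 * X + 2 := by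
  simp only [toP, q1t, List.length_cons, List.length_nil, map_ofNat, map_one, pow_zero,
    pow_one, one_mul, mul_one, add_zero, Nat.zero_add, Nat.reduceAdd]
  ring

lemma hq2 : toP ((1 : ZMod 13) :: q2t) =
    X ^ 4 + 3 * X ^ 3 + X ^ 2 + 6 * X + 5 := by
  simp only [toP, q2t, List.length_cons, List.length_nil, map_ofNat, map_one, pow_zero,
    pow_one, one_mul, mul_one, add_zero, Nat.zero_add, Nat.reduceAdd]
  ring

lemma hq3 : toP ((1 : ZMod 13) :: q3t) =
    X ^ 4 + 12 * X ^ 3 + 12 * X ^ 2 + 11 * X + 5 := by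
  simp only [toP, q3t, List.length_cons, List.length_nil, map_ofNat, map_one, pow_zero,
    pow_one, one_mul, mul_one, add_zero, Nat.zero_add, Nat.reduceAdd]
  ring

lemma hc1 : toP ((1 : ZMod 53) :: c1t) = X ^ 3 + 48 * X ^ 2 + 22 * X + 14 := by
  simp only [toP, c1t, List.length_cons, List.length_nil, map_ofNat, map_one, pow_zero,
    pow_one, one_mul, mul_one, add_zero, Nat.zero_add, Nat.reduceAdd]
  ring

lemma hc2 : toP ((1 : ZMod 53) :: c2t) = X ^ 3 + 44 * X ^ 2 + 47 * X + 18 := by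
  simp only [toP, c2t, List.length_cons, List.length_nil, map_ofNat, map_one, pow_zero,
    pow_one, one_mul, mul_one, add_zero, Nat.zero_add, Nat.reduceAdd]
  ring

lemma hc3 : toP ((1 : ZMod 53) :: c3t) = X ^ 3 + 11 * X ^ 2 + 13 * X + 23 := by
  simp only [toP, c3t, List.length_cons, List.length_nil, map_ofNat, map_one, pow_zero,
    pow_one, one_mul, mul_one, add_zero, Nat.zero_add, Nat.reduceAdd]
  ring

lemma hc4 : toP ((1 : ZMod 53) :: c4t) = X ^ 3 + 47 * X ^ 2 + 11 * X + 51 := by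
  simp only [toP, c4t, List.length_cons, List.length_nil, map_ofNat, map_one, pow_zero,
    pow_one, one_mul, mul_one, add_zero, Nat.zero_add, Nat.reduceAdd]
  ring

lemma deg_q1 : (toP ((1 : ZMod 13) :: q1t)).natDegree = 4 := by
  rw [natDegree_toP_one]; rfl
lemma deg_q2 : (toP ((1 : ZMod 13) :: q2t)).natDegree = 4 := by
  rw [natDegree_toP_one]; rfl
lemma deg_q3 : (toP ((1 : ZMod 13) :: q3t)).natDegree = 4 := by
  rw [natDegree_toP_one]; rfl
lemma deg_c1 : (toP ((1 : ZMod 53) :: c1t)).natDegree = 3 := by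
  rw [natDegree_toP_one]; rfl
lemma deg_c2 : (toP ((1 : ZMod 53) :: c2t)).natDegree = 3 := by
  rw [natDegree_toP_one]; rfl
lemma deg_c3 : (toP ((1 : ZMod 53) :: c3t)).natDegree = 3 := by
  rw [natDegree_toP_one]; rfl
lemma deg_c4 : (toP ((1 : ZMod 53) :: c4t)).natDegree = 3 := by
  rw [natDegree_toP_one]; rfl

lemma e13 : Pz.map (Int.castRingHom (ZMod 13)) =
    7 * (toP ((1 : ZMod 13) :: q1t) * (toP ((1 : ZMod 13) :: q2t) * toP ((1 : ZMod 13) :: q3t))) := by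
  have h : Pz.map (Int.castRingHom (ZMod 13)) =
      7 * X ^ 12 + 126 * X ^ 11 + 686 * X ^ 10 + 1988 * X ^ 9 + 4900 * X ^ 8 + 9919 * X ^ 7 +
        13937 * X ^ 6 + 19348 * X ^ 5 + 20678 * X ^ 4 + 16121 * X ^ 3 + 9674 * X ^ 2 +
        3290 * X + 350 := by
    simp only [Pz, Polynomial.map_add, Polynomial.map_mul, Polynomial.map_pow, map_C,
      Polynomial.map_X, Int.coe_castRingHom]
    rw [show (((7 : ℤ) : ZMod 13)) = 7 by decide,
      show (((308 : ℤ) : ZMod 13)) = 126 by decide,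
      show (((-2954 : ℤ) : ZMod 13)) = 686 by decide,
      show (((-19852 : ℤ) : ZMod 13)) = 1988 by decide,
      show (((-35231 : ℤ) : ZMod 13)) = 4900 by decide,
      show (((-82264 : ℤ) : ZMod 13)) = 9919 by decide,
      show (((-111916 : ℤ) : ZMod 13)) = 13937 by decide,
      show (((-42168 : ℤ) : ZMod 13)) = 19348 by decide,
      show (((15673 : ℤ) : ZMod 13)) = 20678 by decide,
      show (((14756 : ℤ) : ZMod 13)) = 16121 by decide,
      show (((1302 : ℤ) : ZMod 13)) = 9674 by decide,
      show (((196 : ℤ) : ZMod 13)) = 3290 by decide,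
      show (((-1 : ℤ) : ZMod 13)) = 350 by decide]
    simp only [map_ofNat]
  rw [h, hq1, hq2, hq3]
  ring

lemma e53 : Pz.map (Int.castRingHom (ZMod 53)) =
    7 * (toP ((1 : ZMod 53) :: c1t) * (toP ((1 : ZMod 53) :: c2t) *
      (toP ((1 : ZMod 53) :: c3t) * toP ((1 : ZMod 53) :: c4t)))) := by
  have h : Pz.map (Int.castRingHom (ZMod 53)) =
      7 * X ^ 12 + 1050 * X ^ 11 + 56406 * X ^ 10 + 1262324 * X ^ 9 + 10130540 * X ^ 8 +
        26819688 * X ^ 7 + 56170268 * X ^ 6 + 73701502 * X ^ 5 + 77099085 * X ^ 4 +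
        57446298 * X ^ 3 + 30549442 * X ^ 2 + 10270218 * X + 2069172 := by
    simp only [Pz, Polynomial.map_add, Polynomial.map_mul, Polynomial.map_pow, map_C,
      Polynomial.map_X, Int.coe_castRingHom]
    rw [show (((7 : ℤ) : ZMod 53)) = 7 by decide,
      show (((308 : ℤ) : ZMod 53)) = 1050 by decide,
      show (((-2954 : ℤ) : ZMod 53)) = 56406 by decide,
      show (((-19852 : ℤ) : ZMod 53)) = 1262324 by decide,
      show (((-35231 : ℤ) : ZMod 53)) = 10130540 by decide,
      show (((-82264 : ℤ) : ZMod 53)) = 26819688 by decide,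
      show (((-111916 : ℤ) : ZMod 53)) = 56170268 by decide,
      show (((-42168 : ℤ) : ZMod 53)) = 73701502 by decide,
      show (((15673 : ℤ) : ZMod 53)) = 77099085 by decide,
      show (((14756 : ℤ) : ZMod 53)) = 57446298 by decide,
      show (((1302 : ℤ) : ZMod 53)) = 30549442 by decide,
      show (((196 : ℤ) : ZMod 53)) = 10270218 by decide,
      show (((-1 : ℤ) : ZMod 53)) = 2069172 by decide]
    simp only [map_ofNat]
  rw [h, hc1, hc2, hc3, hc4]
  ring

lemma dvd_deg13 (q : (ZMod 13)[X]) (hq : q ∣ Pz.map (Int.castRingHom (ZMod 13))) :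
    4 ∣ q.natDegree := by
  rw [e13] at hq
  set M := toP ((1 : ZMod 13) :: q1t) * (toP ((1 : ZMod 13) :: q2t) * toP ((1 : ZMod 13) :: q3t))
    with hM
  have h14 : (7 : (ZMod 13)[X]) * 2 = 1 := by
    rw [← map_ofNat (C : ZMod 13 →+* _) 7, ← map_ofNat (C : ZMod 13 →+* _) 2, ← map_mul,
      show ((7 : ZMod 13) * 2) = 1 by decide, map_one]
  have hq' : q ∣ M := by
    refine dvd_trans hq ⟨2, ?_⟩
    calc M = 1 * M := (one_mul M).symm
    _ = 7 * 2 * M := by rw [h14]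
    _ = 7 * M * 2 := by ring
  refine deg_dvd_list 4
    [toP ((1 : ZMod 13) :: q1t), toP ((1 : ZMod 13) :: q2t), toP ((1 : ZMod 13) :: q3t)]
    ?_ q (by simpa using hq')
  intro r hr
  simp only [List.mem_cons, List.not_mem_nil, or_false] at hr
  rcases hr with rfl | rfl | rfl
  exacts [⟨irr_q1, deg_q1⟩, ⟨irr_q2, deg_q2⟩, ⟨irr_q3, deg_q3⟩]

lemma dvd_deg53 (q : (ZMod 53)[X]) (hq : q ∣ Pz.map (Int.castRingHom (ZMod 53))) :
    3 ∣ q.natDegree := by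
  rw [e53] at hq
  set M := toP ((1 : ZMod 53) :: c1t) * (toP ((1 : ZMod 53) :: c2t) *
    (toP ((1 : ZMod 53) :: c3t) * toP ((1 : ZMod 53) :: c4t))) with hM
  have h14 : (7 : (ZMod 53)[X]) * 38 = 1 := by
    rw [← map_ofNat (C : ZMod 53 →+* _) 7, ← map_ofNat (C : ZMod 53 →+* _) 38, ← map_mul,
      show ((7 : ZMod 53) * 38) = 1 by decide, map_one]
  have hq' : q ∣ M := by
    refine dvd_trans hq ⟨38, ?_⟩
    calc M = 1 * M := (one_mul M).symm
    _ = 7 * 38 * M := by rw [h14]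
    _ = 7 * M * 38 := by ring
  refine deg_dvd_list 3
    [toP ((1 : ZMod 53) :: c1t), toP ((1 : ZMod 53) :: c2t), toP ((1 : ZMod 53) :: c3t),
      toP ((1 : ZMod 53) :: c4t)] ?_ q (by simpa using hq')
  intro r hr
  simp only [List.mem_cons, List.not_mem_nil, or_false] at hr
  rcases hr with rfl | rfl | rfl | rfl
  exacts [⟨irr_c1, deg_c1⟩, ⟨irr_c2, deg_c2⟩, ⟨irr_c3, deg_c3⟩, ⟨irr_c4, deg_c4⟩]

/-! ### The integer polynomial -/

lemma coeff0_Pz : Pz.coeff 0 = -1 := by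
  simp [Pz, coeff_add, coeff_C_mul, coeff_X_pow, coeff_X, coeff_C, coeff_one, coeff_neg]

lemma coeff12_Pz : Pz.coeff 12 = 7 := by
  simp [Pz, coeff_add, coeff_C_mul, coeff_X_pow, coeff_X, coeff_C, coeff_one, coeff_neg]

lemma natDegree_Pz : Pz.natDegree = 12 := by
  unfold Pz
  compute_degree!

lemma Pz_ne_zero : Pz ≠ 0 := by
  intro h
  have := coeff0_Pz
  rw [h, coeff_zero] at this
  exact absurd this (by norm_num)

lemma prim_Pz : Pz.IsPrimitive := by
  intro r hr
  have h0 := (C_dvd_iff_dvd_coeff r Pz).mp hr 0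
  rw [coeff0_Pz] at h0
  exact isUnit_of_dvd_unit h0 isUnit_one.neg

lemma leadingCoeff_Pz : Pz.leadingCoeff = 7 := by
  rw [Polynomial.leadingCoeff, natDegree_Pz, coeff12_Pz]

lemma natDegree_map_Pz (p : ℕ) [Fact (Nat.Prime p)] (hp : ((7 : ℤ) : ZMod p) ≠ 0) :
    (Pz.map (Int.castRingHom (ZMod p))).natDegree = 12 := by
  rw [natDegree_map_of_leadingCoeff_ne_zero _ (by rw [leadingCoeff_Pz]; exact hp), natDegree_Pz]

lemma factor_deg_eq (p : ℕ) [Fact (Nat.Prime p)] (hp : ((7 : ℤ) : ZMod p) ≠ 0)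
    {a b : ℤ[X]} (hab : Pz = a * b) :
    (a.map (Int.castRingHom (ZMod p))).natDegree = a.natDegree := by
  have ha : a ≠ 0 := fun h => Pz_ne_zero (by rw [hab, h, zero_mul])
  have hb : b ≠ 0 := fun h => Pz_ne_zero (by rw [hab, h, mul_zero])
  have h1 : a.natDegree + b.natDegree = 12 := by
    rw [← Polynomial.natDegree_mul ha hb, ← hab, natDegree_Pz]
  have hPm : (Pz.map (Int.castRingHom (ZMod p))) ≠ 0 := by
    intro h
    have := natDegree_map_Pz p hp
    rw [h, natDegree_zero] at this
    exact absurd this (by norm_num)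
  have hm : a.map (Int.castRingHom (ZMod p)) ≠ 0 ∧ b.map (Int.castRingHom (ZMod p)) ≠ 0 := by
    rw [hab, Polynomial.map_mul] at hPm
    exact mul_ne_zero_iff.mp hPm
  have h2 : (a.map (Int.castRingHom (ZMod p))).natDegree +
      (b.map (Int.castRingHom (ZMod p))).natDegree = 12 := by
    rw [← Polynomial.natDegree_mul hm.1 hm.2, ← Polynomial.map_mul, ← hab, natDegree_map_Pz p hp]
  have l1 := Polynomial.natDegree_map_le (p := a) (f := Int.castRingHom (ZMod p))
  have l2 := Polynomial.natDegree_map_le (p := b) (f := Int.castRingHom (ZMod p))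
  omega

lemma irred_Pz : Irreducible Pz := by
  constructor
  · intro h
    have := natDegree_eq_zero_of_isUnit h
    rw [natDegree_Pz] at this
    exact absurd this (by norm_num)
  · intro a b hab
    have ha : a ≠ 0 := fun h => Pz_ne_zero (by rw [hab, h, zero_mul])
    have hb : b ≠ 0 := fun h => Pz_ne_zero (by rw [hab, h, mul_zero])
    have h1 : a.natDegree + b.natDegree = 12 := by
      rw [← Polynomial.natDegree_mul ha hb, ← hab, natDegree_Pz]
    have hd13 : 4 ∣ a.natDegree := by
      rw [← factor_deg_eq 13 (by decide) hab]
      exact dvd_deg13 _ ⟨b.map (Int.castRingHom (ZMod 13)),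
        by rw [hab, Polynomial.map_mul]⟩
    have hd53 : 3 ∣ a.natDegree := by
      rw [← factor_deg_eq 53 (by decide) hab]
      exact dvd_deg53 _ ⟨b.map (Int.castRingHom (ZMod 53)),
        by rw [hab, Polynomial.map_mul]⟩
    have hcases : a.natDegree = 0 ∨ b.natDegree = 0 := by
      rcases hd13 with ⟨k, hk⟩
      rcases hd53 with ⟨m, hm⟩
      omega
    rcases hcases with h | h
    · left
      rw [eq_C_of_natDegree_eq_zero h]
      refine isUnit_C.mpr (prim_Pz _ ?_)
      exact ⟨b, by rw [hab, ← eq_C_of_natDegree_eq_zero h]⟩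
    · right
      rw [eq_C_of_natDegree_eq_zero h]
      refine isUnit_C.mpr (prim_Pz _ ?_)
      exact ⟨a, by rw [hab, ← eq_C_of_natDegree_eq_zero h, mul_comm]⟩

end Stmt3Aux

open Stmt3Aux in
theorem stmt_3 :
    Irreducible (7 * X ^ 12 + 308 * X ^ 11 - 2954 * X ^ 10 - 19852 * X ^ 9
      - 35231 * X ^ 8 - 82264 * X ^ 7 - 111916 * X ^ 6 - 42168 * X ^ 5
      + 15673 * X ^ 4 + 14756 * X ^ 3 + 1302 * X ^ 2 + 196 * X - 1 : ℚ[X]) := by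
  have hT : (7 * X ^ 12 + 308 * X ^ 11 - 2954 * X ^ 10 - 19852 * X ^ 9
      - 35231 * X ^ 8 - 82264 * X ^ 7 - 111916 * X ^ 6 - 42168 * X ^ 5
      + 15673 * X ^ 4 + 14756 * X ^ 3 + 1302 * X ^ 2 + 196 * X - 1 : ℚ[X])
      = Pz.map (Int.castRingHom ℚ) := by
    simp only [Pz, Polynomial.map_add, Polynomial.map_mul, Polynomial.map_pow, map_C,
      Polynomial.map_X, Int.coe_castRingHom]
    push_cast
    simp only [map_ofNat, map_one, map_neg]
    ring
  rw [hT]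
  exact (Polynomial.IsPrimitive.Int.irreducible_iff_irreducible_map_cast prim_Pz).mp irred_Pz
end
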